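/- Under the MRL construction, the global covariance matrix K with blocks K*_1(X1,X1), K*_1(X1,XB), K_B, K*_2(X2,XB), K*_2(X2,X2), and cross-term D = G1 K_B G2^T is symmetric positive semidefinite, provided K_1 and K_2 are positive semidefinite, their boundary blocks equal K_B, and K_B is invertible. -/

import Mathlib

open Matrix

/-- A block-diagonal matrix with positive semidefinite blocks is positive semidefinite. -/
lemma posSemidef_fromBlocks_diag {m n : Type*} [Fintype m] [Fintype n]
    [DecidableEq m] [DecidableEq n]
    {A : Matrix m m ℝ} {E : Matrix n n ℝ} (hA : A.PosSemidef) (hE : E.PosSemidef) :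
    (Matrix.fromBlocks A 0 0 E).PosSemidef := by
  have h1 : Matrix.fromBlocks A 0 0 E =
      Matrix.fromRows (1 : Matrix m m ℝ) (0 : Matrix n m ℝ) * A *
        (Matrix.fromRows (1 : Matrix m m ℝ) (0 : Matrix n m ℝ))ᴴ +
      Matrix.fromRows (0 : Matrix m n ℝ) (1 : Matrix n n ℝ) * E *
        (Matrix.fromRows (0 : Matrix m n ℝ) (1 : Matrix n n ℝ))ᴴ := by
    simp only [conjTranspose_eq_transpose_of_trivial, transpose_fromRows, transpose_one,
      transpose_zero]
    ext (i | i) (j | j) <;>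
      simp [Matrix.mul_apply, Matrix.fromRows_apply_inl, Matrix.fromRows_apply_inr, Matrix.fromCols, Matrix.fromBlocks,
        Matrix.one_apply, Finset.sum_ite_eq, Fintype.sum_sum_type]
  rw [h1]
  exact (hA.mul_mul_conjTranspose_same _).add (hE.mul_mul_conjTranspose_same _)

/-- The MRL global covariance matrix, with blocks `K*_1(X1,X1) = K1(X1,X1)`,
`K*_1(X1,XB) = K1(X1,XB)`, `K_B`, `K*_2(X2,XB) = K2(X2,XB)`, `K*_2(X2,X2) = K2(X2,X2)`
and cross term `D = G1 K_B G2ᵀ`, is symmetric positive semidefinite, provided `K1` and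
`K2` are positive semidefinite, their boundary blocks both equal `K_B`, and `K_B` is
invertible. -/
theorem stmt_3 {X1 XB X2 : Type*} [Fintype X1] [Fintype XB] [Fintype X2]
    [DecidableEq XB]
    (K1 : Matrix (X1 ⊕ XB) (X1 ⊕ XB) ℝ) (K2 : Matrix (XB ⊕ X2) (XB ⊕ X2) ℝ)
    (KB : Matrix XB XB ℝ)
    (hK1 : K1.PosSemidef) (hK2 : K2.PosSemidef)
    (hB1 : K1.toBlocks₂₂ = KB) (hB2 : K2.toBlocks₁₁ = KB)
    (hKB : IsUnit KB)
    (G1 : Matrix X1 XB ℝ) (G2 : Matrix X2 XB ℝ)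
    (hG1 : G1 = K1.toBlocks₁₂ * KB⁻¹) (hG2 : G2 = K2.toBlocks₂₁ * KB⁻¹)
    (D : Matrix X1 X2 ℝ) (hD : D = G1 * KB * G2ᵀ)
    (K : Matrix (X1 ⊕ (XB ⊕ X2)) (X1 ⊕ (XB ⊕ X2)) ℝ)
    (hK : K = Matrix.fromBlocks K1.toBlocks₁₁
      (Matrix.fromCols K1.toBlocks₁₂ D)
      (Matrix.fromRows K1.toBlocks₂₁ Dᵀ) K2) :
    K.PosSemidef := by
  set A := K1.toBlocks₁₁ with hA
  set B := K1.toBlocks₁₂ with hBdef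
  set E := K2.toBlocks₂₂ with hE
  set F := K2.toBlocks₁₂ with hF
  -- basic symmetry facts
  have hB21 : K1.toBlocks₂₁ = Bᵀ := by
    ext i j
    have := congrFun (congrFun hK1.1 (Sum.inr i)) (Sum.inl j)
    simp only [Matrix.conjTranspose_apply, star_trivial] at this
    exact this.symm
  have hF21 : K2.toBlocks₂₁ = Fᵀ := by
    ext i j
    have := congrFun (congrFun hK2.1 (Sum.inr i)) (Sum.inl j)
    simp only [Matrix.conjTranspose_apply, star_trivial] at this
    exact this.symm
  have hKBpsd : KB.PosSemidef := by
    have : K1.toBlocks₂₂ = K1.submatrix Sum.inr Sum.inr := rfl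
    rw [← hB1, this]
    exact hK1.submatrix _
  have hKBsym : KBᵀ = KB := by
    rw [← conjTranspose_eq_transpose_of_trivial]
    exact hKBpsd.1
  have hdet : IsUnit KB.det := (Matrix.isUnit_iff_isUnit_det KB).mp hKB
  have hKBpd : KB.PosDef := by
    refine posDef_iff_dotProduct_mulVec.mpr ⟨hKBpsd.1, fun x hx => ?_⟩
    rcases eq_or_lt_of_le (hKBpsd.dotProduct_mulVec_nonneg x) with h | h
    · exfalso
      have h0 : KB *ᵥ x = 0 := (hKBpsd.dotProduct_mulVec_zero_iff x).mp h.symm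
      apply hx
      have : (KB⁻¹ * KB) *ᵥ x = 0 := by rw [← Matrix.mulVec_mulVec, h0, Matrix.mulVec_zero]
      rwa [Matrix.nonsing_inv_mul KB hdet, Matrix.one_mulVec] at this
    · exact h
  have hKBinvsym : KB⁻¹ᵀ = KB⁻¹ := by
    rw [Matrix.transpose_nonsing_inv, hKBsym]
  have hinv1 : KB⁻¹ * KB = 1 := Matrix.nonsing_inv_mul KB hdet
  have hinv2 : KB * KB⁻¹ = 1 := Matrix.mul_nonsing_inv KB hdet
  haveI : Invertible KB := hKB.invertible
  -- Schur complements are PSD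
  set S1 := A - B * KB⁻¹ * Bᵀ with hS1def
  set S2 := E - Fᵀ * KB⁻¹ * F with hS2def
  have hS1 : S1.PosSemidef := by
    have h : (Matrix.fromBlocks A B Bᴴ KB).PosSemidef := by
      rw [conjTranspose_eq_transpose_of_trivial, ← hB21, ← hB1]
      rw [hA, hBdef, Matrix.fromBlocks_toBlocks]
      exact hK1
    have := (Matrix.PosDef.fromBlocks₂₂ A B hKBpd).mp h
    rwa [conjTranspose_eq_transpose_of_trivial] at this
  have hS2 : S2.PosSemidef := by
    have h : (Matrix.fromBlocks KB F Fᴴ E).PosSemidef := by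
      rw [conjTranspose_eq_transpose_of_trivial, ← hF21, ← hB2]
      rw [hF, hE, Matrix.fromBlocks_toBlocks]
      exact hK2
    have := (Matrix.PosDef.fromBlocks₁₁ F E hKBpd).mp h
    rwa [conjTranspose_eq_transpose_of_trivial] at this
  -- key identities
  have hG1KB : G1 * KB = B := by
    rw [hG1, Matrix.mul_assoc, hinv1, Matrix.mul_one]
  have hG2KB : G2 * KB = Fᵀ := by
    rw [hG2, hF21, Matrix.mul_assoc, hinv1, Matrix.mul_one]
  have hG1T : G1ᵀ = KB⁻¹ * Bᵀ := by
    rw [hG1, Matrix.transpose_mul, hKBinvsym]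
  have hG2T : G2ᵀ = KB⁻¹ * F := by
    rw [hG2, hF21, Matrix.transpose_mul, hKBinvsym, Matrix.transpose_transpose]
  -- the conjugation decomposition
  classical
  set W : Matrix (X1 ⊕ (XB ⊕ X2)) XB ℝ :=
    Matrix.fromRows G1 (Matrix.fromRows (1 : Matrix XB XB ℝ) G2) with hW
  have eProd : W * KB * Wᴴ = Matrix.fromBlocks (B * G1ᵀ)
      (Matrix.fromCols B (B * G2ᵀ))
      (Matrix.fromRows (KB * G1ᵀ) (Fᵀ * G1ᵀ))
      (Matrix.fromBlocks KB (KB * G2ᵀ) Fᵀ (Fᵀ * G2ᵀ)) := by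
    have eW : W * KB = Matrix.fromRows B (Matrix.fromRows KB Fᵀ) := by
      rw [hW, fromRows_mul, fromRows_mul, one_mul, hG1KB, hG2KB]
    have eWT : Wᴴ = Matrix.fromCols G1ᵀ (Matrix.fromCols (1 : Matrix XB XB ℝ) G2ᵀ) := by
      rw [conjTranspose_eq_transpose_of_trivial, hW, transpose_fromRows, transpose_fromRows,
        transpose_one]
    rw [eW, eWT, fromRows_mul_fromCols, mul_fromCols, Matrix.mul_one, fromRows_mul,
      fromRows_mul_fromCols, Matrix.mul_one, Matrix.mul_one]
  have key : K = W * KB * Wᴴ +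
      Matrix.fromBlocks S1 0 0 (Matrix.fromBlocks 0 0 0 S2) := by
    rw [eProd, Matrix.fromBlocks_add, hK, Matrix.fromBlocks_inj]
    refine ⟨?_, ?_, ?_, ?_⟩
    -- block (1,1)
    · rw [hG1T, hS1def, ← Matrix.mul_assoc]
      abel
    -- block (1,2)
    · rw [add_zero, hD, hG1KB]
    -- block (2,1)
    · have hDT : Dᵀ = Fᵀ * (KB⁻¹ * Bᵀ) := by
        rw [hD, hG1KB, Matrix.transpose_mul, Matrix.transpose_transpose, hG2, hF21,
          Matrix.mul_assoc]
      rw [add_zero, hB21, hG1T, ← Matrix.mul_assoc KB KB⁻¹ Bᵀ, hinv2, Matrix.one_mul, hDT]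
    -- block (2,2)
    · rw [Matrix.fromBlocks_add, ← Matrix.fromBlocks_toBlocks K2, hB2, hF21,
        Matrix.fromBlocks_inj]
      refine ⟨?_, ?_, ?_, ?_⟩
      · rw [add_zero]
      · rw [add_zero, hG2T, ← Matrix.mul_assoc, hinv2, Matrix.one_mul]
      · rw [add_zero]
      · rw [hG2T, hS2def, ← Matrix.mul_assoc]
        abel
  rw [key]
  exact (hKBpsd.mul_mul_conjTranspose_same W).add
    (posSemidef_fromBlocks_diag hS1 (posSemidef_fromBlocks_diag Matrix.PosSemidef.zero hS2))
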